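/- arXiv:0708.1586 — 2 statements merged into one kernel-verified Lean document; each statement's English description precedes it below -/
import Mathlib

section
/- Let V be a finite-dimensional real vector space and ω̂ a scalar (real-valued) polylagrangian (k+1)-form on V of rank N with N > k > 1 and polylagrangian subspace L, with ω̂ nondegenerate. Then any two-dimensional isotropic subspace of V intersects L nontrivially; consequently for any isotropic subspace L̃ of V, dim L̃ − dim(L̃ ∩ L) ≤ 1. -/
open Module

/-- `L` is a polylagrangian subspace for the scalar `(k+1)`-form `ω`. -/
def IsPolyLag {V : Type*} [AddCommGroup V] [Module ℝ V]
    {k : ℕ} (ω : V [⋀^Fin (k+1)]→ₗ[ℝ] ℝ) (L : Submodule ℝ V) : Prop :=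
  ∀ α : V [⋀^Fin k]→ₗ[ℝ] ℝ,
    (∃ v ∈ L, ∀ x : Fin k → V, ω (Fin.cons v x) = α x)
      ↔ ∀ (x : Fin k → V) (i : Fin k), x i ∈ L → α x = 0

private lemma extendPair {W : Type*} [AddCommGroup W] [Module ℝ W] [FiniteDimensional ℝ W]
    {x y : W} (h : LinearIndependent ℝ ![x, y]) :
    ∀ n : ℕ, n + 2 ≤ finrank ℝ W →
      ∃ z : Fin (n+2) → W, LinearIndependent ℝ z ∧ z 0 = x ∧ z 1 = y := by
  intro n
  induction n with
  | zero => exact fun _ => ⟨![x, y], h, rfl, rfl⟩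
  | succ n ih =>
    intro hle
    obtain ⟨z, hz, h0, h1⟩ := ih (by omega)
    obtain ⟨a, ha⟩ := exists_linearIndependent_snoc_of_lt_finrank hz (by omega)
    refine ⟨Fin.snoc z a, ha, ?_, ?_⟩
    · have e : (0 : Fin (n+3)) = Fin.castSucc (0 : Fin (n+2)) := by
        apply Fin.ext; simp
      rw [e, Fin.snoc_castSucc, h0]
    · have e : (1 : Fin (n+3)) = Fin.castSucc (1 : Fin (n+2)) := by
        apply Fin.ext; simp
      rw [e, Fin.snoc_castSucc, h1]

private lemma dualFamily {W : Type*} [AddCommGroup W] [Module ℝ W] {m : ℕ}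
    {z : Fin m → W} (hz : LinearIndependent ℝ z) :
    ∃ φ : Fin m → (W →ₗ[ℝ] ℝ), ∀ i j, φ i (z j) = if i = j then 1 else 0 := by
  let bS := Basis.span hz
  choose g hg using fun i => LinearMap.exists_extend (V' := ℝ) (bS.coord i)
  refine ⟨g, fun i j => ?_⟩
  have hzj : z j ∈ Submodule.span ℝ (Set.range z) := Submodule.subset_span ⟨j, rfl⟩
  have h1 : g i (z j) = bS.coord i ⟨z j, hzj⟩ := LinearMap.congr_fun (hg i) ⟨z j, hzj⟩
  have h2 : (⟨z j, hzj⟩ : Submodule.span ℝ (Set.range z)) = bS j :=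
    (Basis.span_apply hz j).symm
  rw [h1, h2, Basis.coord_apply, Basis.repr_self]
  simp [Finsupp.single_apply, eq_comm]

private lemma key {V : Type*} [AddCommGroup V] [Module ℝ V] [FiniteDimensional ℝ V]
    {k N : ℕ} (hk : 1 < k) (hkN : k < N)
    (ω : V [⋀^Fin (k+1)]→ₗ[ℝ] ℝ) (L L' : Submodule ℝ V)
    (hL : IsPolyLag ω L) (hN : Module.finrank ℝ (V ⧸ L) = N)
    (hiso : ∀ x : Fin (k+1) → V, x 0 ∈ L' → x 1 ∈ L' → ω x = 0)
    {u w : V} (hu : u ∈ L') (hw : w ∈ L')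
    (hind : LinearIndependent ℝ ![L.mkQ u, L.mkQ w]) : False := by
  obtain ⟨m, rfl⟩ : ∃ m, k = m + 2 := ⟨k - 2, by omega⟩
  obtain ⟨z, hz, hz0, hz1⟩ := extendPair hind m (by omega)
  obtain ⟨φ, hφ⟩ := dualFamily hz
  classical
  set Φ : Fin (m+2) → V →ₗ[ℝ] ℝ := fun i => (φ i).comp L.mkQ with hΦ
  set x : Fin (m+2) → V := fun i =>
    if i = 0 then u else if i = 1 then w
      else Function.surjInv (Submodule.mkQ_surjective L) (z i) with hxdef
  have hx : ∀ i, L.mkQ (x i) = z i := by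
    intro i
    by_cases h0 : i = 0
    · subst h0; simp [hxdef, hz0]
    · by_cases h1 : i = 1
      · subst h1; simp [hxdef, hz1]
      · simp only [hxdef, if_neg h0, if_neg h1]
        exact Function.surjInv_eq (Submodule.mkQ_surjective L) (z i)
  set θ : V [⋀^Fin (m+2)]→ₗ[ℝ] ℝ :=
    Matrix.detRowAlternating.compLinearMap (LinearMap.pi Φ) with hθ
  have hθ_apply : ∀ y : Fin (m+2) → V,
      θ y = Matrix.det (Matrix.of fun i j => Φ j (y i)) := by
    intro y; rfl
  have h0 : ∀ (y : Fin (m+2) → V) (i : Fin (m+2)), y i ∈ L → θ y = 0 := by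
    intro y i hyi
    rw [hθ_apply]
    apply Matrix.det_eq_zero_of_row_eq_zero i
    intro j
    simp only [Matrix.of_apply, hΦ, LinearMap.comp_apply]
    have : L.mkQ (y i) = 0 := by
      rw [Submodule.mkQ_apply, Submodule.Quotient.mk_eq_zero]; exact hyi
    rw [this, map_zero]
  obtain ⟨v, hvL, hv⟩ := (hL θ).mpr h0
  have hθx : θ x = 1 := by
    rw [hθ_apply]
    have : (Matrix.of fun i j => Φ j (x i)) = (1 : Matrix (Fin (m+2)) (Fin (m+2)) ℝ) := by
      funext i j
      simp only [Matrix.of_apply, hΦ, LinearMap.comp_apply, hx i, hφ j i, Matrix.one_apply]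
      simp [eq_comm]
    rw [this, Matrix.det_one]
  have h01 : (0 : Fin (m+3)) ≠ 1 := by simp [Fin.ext_iff]
  have h02 : (0 : Fin (m+3)) ≠ 2 := by
    simp [Fin.ext_iff, Fin.val_two]
    rw [Nat.mod_eq_of_lt (by omega)]; omega
  have h12 : (1 : Fin (m+3)) ≠ 2 := by
    simp [Fin.ext_iff, Fin.val_two]
    rw [Nat.mod_eq_of_lt (by omega)]; omega
  set σ : Equiv.Perm (Fin (m+3)) := Equiv.swap 0 2 * Equiv.swap 0 1 with hσ
  have hσ0 : σ 0 = 1 := by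
    rw [hσ, Equiv.Perm.mul_apply, Equiv.swap_apply_left,
      Equiv.swap_apply_of_ne_of_ne (Ne.symm h01) h12]
  have hσ1 : σ 1 = 2 := by
    rw [hσ, Equiv.Perm.mul_apply, Equiv.swap_apply_right, Equiv.swap_apply_left]
  have e1 : (1 : Fin (m+3)) = Fin.succ (0 : Fin (m+2)) := by
    apply Fin.ext; simp
  have e2 : (2 : Fin (m+3)) = Fin.succ (1 : Fin (m+2)) := by
    apply Fin.ext; simp [Fin.val_two]
  have hy0 : (Fin.cons v x ∘ σ) 0 = u := by
    simp only [Function.comp_apply, hσ0, e1, Fin.cons_succ]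
    simp [hxdef]
  have hy1 : (Fin.cons v x ∘ σ) 1 = w := by
    simp only [Function.comp_apply, hσ1, e2, Fin.cons_succ]
    simp [hxdef, h01.symm]
  have hzero : ω (Fin.cons v x ∘ σ) = 0 := by
    apply hiso
    · rw [hy0]; exact hu
    · rw [hy1]; exact hw
  have hsign : Equiv.Perm.sign σ = 1 := by
    rw [hσ, Equiv.Perm.sign_mul, Equiv.Perm.sign_swap h02, Equiv.Perm.sign_swap h01]
    simp
  have hperm := ω.map_perm (Fin.cons v x) σ
  rw [hzero, hsign, one_smul] at hperm
  have h1 : ω (Fin.cons v x) = 1 := by rw [hv x, hθx]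
  rw [h1] at hperm
  exact one_ne_zero hperm.symm

/-- For a nondegenerate scalar polylagrangian `(k+1)`-form of rank `N` with `N > k > 1`:
every two-dimensional isotropic subspace intersects the polylagrangian subspace `L`
nontrivially, and consequently any isotropic subspace `L'` satisfies
`dim L' − dim (L' ∩ L) ≤ 1`. -/
theorem stmt5 {V : Type*} [AddCommGroup V] [Module ℝ V] [FiniteDimensional ℝ V]
    {k N : ℕ} (hk : 1 < k) (hkN : k < N)
    (ω : V [⋀^Fin (k+1)]→ₗ[ℝ] ℝ) (hnd : LinearMap.ker ω.curryLeft = ⊥)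
    (L : Submodule ℝ V) (hL : IsPolyLag ω L) (hN : Module.finrank ℝ (V ⧸ L) = N) :
    (∀ L' : Submodule ℝ V,
        (∀ x : Fin (k+1) → V, x 0 ∈ L' → x 1 ∈ L' → ω x = 0) →
        Module.finrank ℝ ↥L' = 2 → L' ⊓ L ≠ ⊥)
      ∧ ∀ L' : Submodule ℝ V,
          (∀ x : Fin (k+1) → V, x 0 ∈ L' → x 1 ∈ L' → ω x = 0) →
          Module.finrank ℝ ↥L' - Module.finrank ℝ ↥(L' ⊓ L) ≤ 1 := by
  constructor
  · intro L' hiso hrank hbot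
    have b := Module.finBasisOfFinrankEq ℝ L' hrank
    have hu : (b 0 : V) ∈ L' := (b 0).2
    have hw : (b 1 : V) ∈ L' := (b 1).2
    have hbli : LinearIndependent ℝ ![b 0, b 1] := by
      have hb : ![b 0, b 1] = ⇑b := by
        funext a; fin_cases a <;> rfl
      rw [hb]; exact b.linearIndependent
    have hind : LinearIndependent ℝ ![L.mkQ (b 0 : V), L.mkQ (b 1 : V)] := by
      rw [LinearIndependent.pair_iff]
      intro s t hst
      have hmem : s • (b 0 : V) + t • (b 1 : V) ∈ L := by
        rw [← Submodule.Quotient.mk_eq_zero, ← Submodule.mkQ_apply, map_add, map_smul, map_smul]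
        exact hst
      have hmem' : s • (b 0 : V) + t • (b 1 : V) ∈ L' :=
        L'.add_mem (L'.smul_mem _ hu) (L'.smul_mem _ hw)
      have hmem'' : s • (b 0 : V) + t • (b 1 : V) ∈ L' ⊓ L := ⟨hmem', hmem⟩
      rw [hbot, Submodule.mem_bot] at hmem''
      have hzero : s • b 0 + t • b 1 = 0 := by
        apply Subtype.ext; simpa using hmem''
      exact hbli.eq_zero_of_pair hzero
    exact key hk hkN ω L L' hL hN hiso hu hw hind
  · intro L' hiso
    by_contra hge
    push_neg at hge
    set K : Submodule ℝ L' := (L' ⊓ L).comap L'.subtype with hK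
    have hKrank : Module.finrank ℝ K = Module.finrank ℝ ↥(L' ⊓ L) :=
      (Submodule.comapSubtypeEquivOfLe (inf_le_left : L' ⊓ L ≤ L')).finrank_eq
    have hQ : 2 ≤ Module.finrank ℝ (L' ⧸ K) := by
      have := K.finrank_quotient_add_finrank
      omega
    set c := Module.finBasis ℝ (L' ⧸ K) with hc
    set i₀ : Fin (Module.finrank ℝ (L' ⧸ K)) := ⟨0, by omega⟩ with hi₀
    set i₁ : Fin (Module.finrank ℝ (L' ⧸ K)) := ⟨1, by omega⟩ with hi₁
    have hi01 : i₀ ≠ i₁ := by simp [hi₀, hi₁, Fin.ext_iff]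
    have hcli : LinearIndependent ℝ ![c i₀, c i₁] := by
      have hfinj : Function.Injective ![i₀, i₁] := by
        intro a b hab
        fin_cases a <;> fin_cases b <;> simp_all
      have hcc : ![c i₀, c i₁] = ⇑c ∘ ![i₀, i₁] := by
        funext a; fin_cases a <;> rfl
      rw [hcc]
      exact c.linearIndependent.comp _ hfinj
    obtain ⟨u', hu'⟩ := Submodule.mkQ_surjective K (c i₀)
    obtain ⟨w', hw'⟩ := Submodule.mkQ_surjective K (c i₁)
    have hind : LinearIndependent ℝ ![L.mkQ (u' : V), L.mkQ (w' : V)] := by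
      rw [LinearIndependent.pair_iff]
      intro s t hst
      have hmem : s • (u' : V) + t • (w' : V) ∈ L := by
        rw [← Submodule.Quotient.mk_eq_zero, ← Submodule.mkQ_apply, map_add, map_smul, map_smul]
        exact hst
      have hmemK : s • u' + t • w' ∈ K := by
        rw [hK, Submodule.mem_comap]
        exact ⟨(s • u' + t • w').2, by simpa using hmem⟩
      have hq : s • c i₀ + t • c i₁ = 0 := by
        rw [← hu', ← hw', ← map_smul, ← map_smul, ← map_add, Submodule.mkQ_apply,
          Submodule.Quotient.mk_eq_zero]
        exact hmemK
      exact hcli.eq_zero_of_pair hq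
    exact key hk hkN ω L L' hL hN hiso u'.2 w'.2 hind
end

section
/- Let V be a finite-dimensional real vector space and ω̂ a scalar polylagrangian (k+1)-form on V of rank N with polylagrangian subspace L. Then every isotropic subspace L̃ of V that contains ker ω̂ and satisfies dim L̃ > dim ker ω̂ + C(N−1, k) + 1 is contained in L. In particular, if N > k > 1, the polylagrangian subspace L is unique. -/
open Module

set_option linter.unusedSectionVars false

section Aux

variable {V : Type*} [AddCommGroup V] [Module ℝ V]

def evalAt {k : ℕ} (x : Fin k → V) : (V [⋀^Fin k]→ₗ[ℝ] ℝ) →ₗ[ℝ] ℝ where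
  toFun α := α x
  map_add' := by intros; simp
  map_smul' := by intros; simp

noncomputable def vanish (M : Submodule ℝ V) (k : ℕ) : Submodule ℝ (V [⋀^Fin k]→ₗ[ℝ] ℝ) where
  carrier := {α | ∀ (x : Fin k → V) (i : Fin k), x i ∈ M → α x = 0}
  add_mem' := by intro a b ha hb x i hx; simp [ha x i hx, hb x i hx]
  zero_mem' := by intro x i hx; simp
  smul_mem' := by intro c a ha x i hx; simp [ha x i hx]

lemma mem_vanish_iff {M : Submodule ℝ V} {k : ℕ} {α : V [⋀^Fin k]→ₗ[ℝ] ℝ} :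
    α ∈ vanish M k ↔ ∀ (x : Fin k → V) (i : Fin k), x i ∈ M → α x = 0 := Iff.rfl

/-- The determinant form attached to a family of functionals. -/
noncomputable def detF {k : ℕ} (f : Fin k → (V →ₗ[ℝ] ℝ)) : V [⋀^Fin k]→ₗ[ℝ] ℝ :=
  (Matrix.detRowAlternating).compLinearMap (LinearMap.pi f)

lemma detF_apply {k : ℕ} (f : Fin k → (V →ₗ[ℝ] ℝ)) (x : Fin k → V) :
    detF f x = Matrix.det (Matrix.of fun i l => f l (x i)) := rfl

lemma detF_mem_vanish {k : ℕ} {M : Submodule ℝ V} {f : Fin k → (V →ₗ[ℝ] ℝ)}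
    (hf : ∀ l, ∀ v ∈ M, f l v = 0) : detF f ∈ vanish M k := by
  intro x i hx
  rw [detF_apply]
  exact Matrix.det_eq_zero_of_row_eq_zero i (fun l => hf l _ hx)

lemma detF_eval_one {k : ℕ} {f : Fin k → (V →ₗ[ℝ] ℝ)} {x : Fin k → V}
    (h : ∀ l i, f l (x i) = if l = i then 1 else 0) : detF f x = 1 := by
  rw [detF_apply]
  have : (Matrix.of fun i l => f l (x i)) = (1 : Matrix (Fin k) (Fin k) ℝ) := by
    ext i l
    rw [Matrix.of_apply, h l i, Matrix.one_apply]
    simp [eq_comm]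
  rw [this, Matrix.det_one]

lemma extend_li {W : Type*} [AddCommGroup W] [Module ℝ W] [FiniteDimensional ℝ W]
    (j : ℕ) (r : ℕ) (w : Fin r → W) (hw : LinearIndependent ℝ w)
    (hle : r + j ≤ finrank ℝ W) :
    ∃ u : Fin (r+j) → W, (∀ i : Fin r, u (Fin.castLE (by omega) i) = w i) ∧
      LinearIndependent ℝ u := by
  induction j with
  | zero => exact ⟨w, fun i => rfl, hw⟩
  | succ j ih =>
      obtain ⟨u, hu1, hu2⟩ := ih (by omega)
      have hspan : Submodule.span ℝ (Set.range u) ≠ ⊤ := by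
        intro htop
        have := finrank_span_eq_card hu2
        rw [htop] at this
        simp [finrank_top] at this
        omega
      obtain ⟨x, hx⟩ : ∃ x : W, x ∉ Submodule.span ℝ (Set.range u) := by
        by_contra hall
        push_neg at hall
        exact hspan (Submodule.eq_top_iff'.mpr hall)
      refine ⟨Fin.snoc u x, fun i => ?_, linearIndependent_fin_snoc.mpr ⟨hu2, hx⟩⟩
      have : (Fin.castLE (by omega) i : Fin (r+j+1)) =
          Fin.castSucc (Fin.castLE (by omega) i) := Fin.ext rfl
      rw [this, Fin.snoc_castSucc, hu1]

/-- Given a family whose image in the quotient is independent, there is a form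
vanishing on `M` taking value 1. -/
lemma exists_vanish_eval_one [FiniteDimensional ℝ V] {k : ℕ} (hk : 0 < k)
    (M : Submodule ℝ V) (c : Fin k → V)
    (hc : LinearIndependent ℝ (fun i => M.mkQ (c i))) :
    ∃ α ∈ vanish M k, α c = 1 := by
  classical
  set m := finrank ℝ (V ⧸ M) with hm
  have hkm : k ≤ m := by
    simpa using hc.fintype_card_le_finrank
  obtain ⟨u, hu1, hu2⟩ := extend_li (m - k) k _ hc (by omega)
  haveI : Nonempty (Fin (k + (m - k))) := ⟨⟨0, by omega⟩⟩
  have hcard : Fintype.card (Fin (k + (m-k))) = finrank ℝ (V ⧸ M) := by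
    simp; omega
  let b := basisOfLinearIndependentOfCardEqFinrank hu2 hcard
  have hb : ∀ i, b i = u i := by
    intro i
    rw [coe_basisOfLinearIndependentOfCardEqFinrank]
  let f : Fin k → (V →ₗ[ℝ] ℝ) :=
    fun l => (b.coord (Fin.castLE (by omega) l)) ∘ₗ M.mkQ
  refine ⟨detF f, detF_mem_vanish (fun l v hv => ?_), detF_eval_one (fun l i => ?_)⟩
  · have : M.mkQ v = 0 := by simpa [Submodule.Quotient.mk_eq_zero] using hv
    simp [f, this]
  · have h1 : M.mkQ (c i) = b (Fin.castLE (by omega) i) := by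
      rw [hb, hu1]
    simp only [f, LinearMap.comp_apply, h1, Basis.coord_apply, Basis.repr_self]
    rw [Finsupp.single_apply]
    simp [Fin.castLE_inj, eq_comm]

lemma vanish_sup_mem {M M' : Submodule ℝ V} {k : ℕ} {α : V [⋀^Fin k]→ₗ[ℝ] ℝ}
    (h1 : α ∈ vanish M k) (h2 : α ∈ vanish M' k) : α ∈ vanish (M ⊔ M') k := by
  intro x i hx
  rcases Submodule.mem_sup.mp hx with ⟨a, ha, b, hb, hab⟩
  have hx' : x = Function.update x i (a + b) := by rw [hab, Function.update_eq_self]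
  rw [hx', AlternatingMap.map_update_add]
  rw [h1 _ i (by simp [ha]), h2 _ i (by simp [hb]), add_zero]

@[simp] lemma evalAt_apply {k : ℕ} (x : Fin k → V) (α : V [⋀^Fin k]→ₗ[ℝ] ℝ) :
    evalAt x α = α x := rfl

instance formsFinDim [FiniteDimensional ℝ V] (k : ℕ) :
    FiniteDimensional ℝ (V [⋀^Fin k]→ₗ[ℝ] ℝ) := by
  classical
  let b : Basis (Fin (finrank ℝ V)) ℝ V := finBasis ℝ V
  let Φ : (V [⋀^Fin k]→ₗ[ℝ] ℝ) →ₗ[ℝ] ((Fin k → Fin (finrank ℝ V)) → ℝ) :=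
    LinearMap.pi (fun v => evalAt (fun i => b (v i)))
  refine Module.Finite.of_injective Φ ?_
  intro α β h
  exact b.ext_alternating (fun v _ => congrFun h v)

lemma choose_le_finrank_vanish [FiniteDimensional ℝ V] (M : Submodule ℝ V) (k : ℕ) :
    (finrank ℝ (V ⧸ M)).choose k ≤ finrank ℝ ↥(vanish M k) := by
  classical
  set m := finrank ℝ (V ⧸ M) with hm
  let bq : Basis (Fin m) ℝ (V ⧸ M) := finBasis ℝ (V ⧸ M)
  choose c hc using fun i => M.mkQ_surjective (bq i)
  let f : Fin m → (V →ₗ[ℝ] ℝ) := fun l => (bq.coord l) ∘ₗ M.mkQ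
  have hfM : ∀ l, ∀ v ∈ M, f l v = 0 := by
    intro l v hv
    have : M.mkQ v = 0 := by simpa [Submodule.Quotient.mk_eq_zero] using hv
    simp [f, this]
  have hfc : ∀ l i, f l (c i) = if i = l then 1 else 0 := by
    intro l i
    simp only [f, LinearMap.comp_apply, hc, Basis.coord_apply, Basis.repr_self]
    rw [Finsupp.single_apply]
  let ι := {S : Finset (Fin m) // S.card = k}
  let e : ι → (Fin k → Fin m) := fun S => S.1.orderEmbOfFin S.2
  have hemem : ∀ (S : ι) (i : Fin k), e S i ∈ S.1 := fun S i => Finset.orderEmbOfFin_mem _ _ _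
  have heinj : ∀ S : ι, Function.Injective (e S) := fun S => (S.1.orderEmbOfFin S.2).injective
  have hDmem : ∀ S : ι, detF (fun l => f (e S l)) ∈ vanish M k :=
    fun S => detF_mem_vanish (fun l v hv => hfM _ v hv)
  let D : ι → ↥(vanish M k) := fun S => ⟨detF (fun l => f (e S l)), hDmem S⟩
  have hval : ∀ S T : ι, detF (fun l => f (e S l)) (fun i => c (e T i)) =
      if S = T then 1 else 0 := by
    intro S T
    by_cases hST : S = T
    · subst hST
      simp only [if_pos rfl]
      apply detF_eval_one
      intro l i
      rw [hfc]
      simp [(heinj S).eq_iff, eq_comm]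
    · rw [if_neg hST]
      have hne : ∃ a ∈ S.1, a ∉ T.1 := by
        by_contra hsub
        push_neg at hsub
        have : S.1 = T.1 := Finset.eq_of_subset_of_card_le hsub (by rw [S.2, T.2])
        exact hST (Subtype.ext this)
      obtain ⟨a, haS, haT⟩ := hne
      have : ∃ l₀, e S l₀ = a := by
        have := Finset.range_orderEmbOfFin S.1 S.2
        have ha : a ∈ Set.range (e S) := by rw [show Set.range (e S) = ↑S.1 from this]; exact haS
        exact ha
      obtain ⟨l₀, hl₀⟩ := this
      rw [detF_apply]
      apply Matrix.det_eq_zero_of_column_eq_zero l₀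
      intro i
      rw [Matrix.of_apply, hfc]
      rw [if_neg]
      intro hEq
      apply haT
      rw [← hl₀, ← hEq]
      exact hemem T i
  have hind : LinearIndependent ℝ D := by
    refine (Fintype.linearIndependent_iff (R := ℝ) (M := ↥(vanish M k)) (v := D)).mpr ?_
    intro g hg T
    have hg' : (∑ S : ι, g S • (D S : V [⋀^Fin k]→ₗ[ℝ] ℝ)) = 0 := by
      have := congrArg ((vanish M k).subtype) hg
      simpa using this
    have := congrArg (evalAt (fun i => c (e T i))) hg'
    rw [map_sum] at this
    simp only [map_smul, evalAt_apply, smul_eq_mul] at this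
    have heval : ∀ S : ι, (D S : V [⋀^Fin k]→ₗ[ℝ] ℝ) (fun i => c (e T i)) =
        if S = T then 1 else 0 := fun S => hval S T
    rw [Finset.sum_congr rfl (fun S _ => by rw [heval S])] at this
    simp [mul_ite] at this
    rwa [Finset.sum_eq_single T (fun S _ hS => if_neg hS) (fun h => absurd (Finset.mem_univ T) h), if_pos rfl] at this
  have := hind.fintype_card_le_finrank
  calc m.choose k = Fintype.card ι := by
        rw [Fintype.card_finset_len, Fintype.card_fin]
    _ ≤ finrank ℝ ↥(vanish M k) := this

lemma finrank_vanish_le [FiniteDimensional ℝ V] (hn : 0 < finrank ℝ V)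
    (M : Submodule ℝ V) (k : ℕ) :
    finrank ℝ ↥(vanish M k) ≤ (finrank ℝ (V ⧸ M)).choose k := by
  classical
  set n := finrank ℝ V with hn'
  set dM := finrank ℝ ↥M with hdM
  set m := finrank ℝ (V ⧸ M) with hm
  have hnm : m + dM = n := Submodule.finrank_quotient_add_finrank M
  let bM : Basis (Fin dM) ℝ ↥M := finBasis ℝ ↥M
  have hw : LinearIndependent ℝ (fun i => (bM i : V)) :=
    bM.linearIndependent.map' M.subtype (Submodule.ker_subtype M)
  obtain ⟨u, hu1, hu2⟩ := extend_li m dM _ hw (by omega)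
  haveI : Nonempty (Fin (dM + m)) := ⟨⟨0, by omega⟩⟩
  have hcard : Fintype.card (Fin (dM + m)) = finrank ℝ V := by simp; omega
  let b := basisOfLinearIndependentOfCardEqFinrank hu2 hcard
  have hb : ∀ i, b i = u i := by
    intro i; rw [coe_basisOfLinearIndependentOfCardEqFinrank]
  have hbM : ∀ (i : Fin (dM + m)) (h : (i : ℕ) < dM), b i ∈ M := by
    intro i h
    have : (Fin.castLE (by omega : dM ≤ dM + m) ⟨(i : ℕ), h⟩) = i := Fin.ext rfl
    rw [hb, ← this, hu1]
    exact (bM ⟨(i : ℕ), h⟩).2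
  let emb : Fin m → Fin (dM + m) := fun l => ⟨dM + (l : ℕ), by omega⟩
  let ι := {S : Finset (Fin m) // S.card = k}
  let e : ι → (Fin k → Fin m) := fun S => S.1.orderEmbOfFin S.2
  let Φ : ↥(vanish M k) →ₗ[ℝ] (ι → ℝ) :=
    LinearMap.pi (fun S => (evalAt (fun i => b (emb (e S i)))) ∘ₗ (vanish M k).subtype)
  have hΦinj : Function.Injective Φ := by
    refine (LinearMap.ker_eq_bot (R := ℝ) (R₂ := ℝ) (M := ↥(vanish M k)) (M₂ := ι → ℝ)
      (τ₁₂ := RingHom.id ℝ) (f := Φ)).mp ?_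
    refine LinearMap.ker_eq_bot'.mpr ?_
    intro α hα
    have hα' : ∀ S : ι, (α : V [⋀^Fin k]→ₗ[ℝ] ℝ) (fun i => b (emb (e S i))) = 0 := by
      intro S
      exact congrFun hα S
    apply Subtype.ext
    show (α : V [⋀^Fin k]→ₗ[ℝ] ℝ) = 0
    refine b.ext_alternating (fun v hv => ?_)
    rw [show ((0 : V [⋀^Fin k]→ₗ[ℝ] ℝ) fun i => b (v i)) = 0 from rfl]
    by_cases hM : ∃ i, (v i : ℕ) < dM
    · obtain ⟨i, hi⟩ := hM
      exact α.2 _ i (hbM (v i) hi)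
    · push_neg at hM
      let u' : Fin k → Fin m := fun i => ⟨(v i : ℕ) - dM, by
        have := (v i).2
        have := hM i
        simp at this ⊢
        omega⟩
      have hvu : ∀ i, v i = emb (u' i) := by
        intro i
        apply Fin.ext
        have := hM i
        simp [emb, u']
        omega
      have hu'inj : Function.Injective u' := by
        intro i j hij
        apply hv
        rw [hvu i, hvu j, hij]
      have hT : (Finset.image u' Finset.univ).card = k := by
        rw [Finset.card_image_of_injective _ hu'inj, Finset.card_univ, Fintype.card_fin]
      let S : ι := ⟨Finset.image u' Finset.univ, hT⟩
      have hmem : ∀ i, u' i ∈ S.1 := by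
        intro i; exact Finset.mem_image_of_mem _ (Finset.mem_univ i)
      let σ : Fin k → Fin k := fun i => (S.1.orderIsoOfFin S.2).symm ⟨u' i, hmem i⟩
      have hσinj : Function.Injective σ := by
        intro i j hij
        have := congrArg (S.1.orderIsoOfFin S.2) hij
        simp only [σ, OrderIso.apply_symm_apply] at this
        exact hu'inj (congrArg Subtype.val this)
      let σe : Equiv.Perm (Fin k) := Equiv.ofBijective σ
        ((Finite.injective_iff_bijective).mp hσinj)
      have hkey : ∀ i, e S (σ i) = u' i := by
        intro i
        show S.1.orderEmbOfFin S.2 (σ i) = u' i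
        rw [← Finset.coe_orderIsoOfFin_apply]
        simp [σ]
      have : (fun i => b (v i)) = (fun i => b (emb (e S i))) ∘ σe := by
        funext i
        show b (v i) = b (emb (e S (σ i)))
        rw [hkey, hvu]
      rw [this, AlternatingMap.map_perm]
      rw [hα' S]
      simp
  have h1 : finrank ℝ ↥(vanish M k) ≤ finrank ℝ (ι → ℝ) :=
    LinearMap.finrank_le_finrank_of_injective hΦinj
  rw [finrank_fintype_fun_eq_card] at h1
  rwa [show Fintype.card ι = m.choose k by rw [Fintype.card_finset_len, Fintype.card_fin]] at h1

lemma cons_val_one' {n : ℕ} (a : V) (y : Fin (n+1) → V) :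
    (Fin.cons a y : Fin (n+2) → V) 1 = y 0 := by
  rw [← Fin.succ_zero_eq_one, Fin.cons_succ]

lemma cons_val_two' {n : ℕ} (a : V) (y : Fin (n+2) → V) :
    (Fin.cons a y : Fin (n+3) → V) 2 = y 1 := by
  rw [← Fin.succ_one_eq_two, Fin.cons_succ]

lemma fin_zero_ne_one {n : ℕ} : (0 : Fin (n+2)) ≠ 1 := by
  simp [Fin.ext_iff]

lemma fin_one_ne_two {n : ℕ} : (1 : Fin (n+3)) ≠ 2 := by
  simp [Fin.ext_iff, Nat.mod_eq_of_lt (show 2 < n+3 by omega)]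

lemma fin_zero_ne_two {n : ℕ} : (0 : Fin (n+3)) ≠ 2 := by
  simp [Fin.ext_iff, Nat.mod_eq_of_lt (show 2 < n+3 by omega)]

lemma rot3_eq {n : ℕ} (g : V [⋀^Fin (n+3)]→ₗ[ℝ] ℝ) (t : Fin (n+3) → V) :
    g ((t ∘ Equiv.swap (0 : Fin (n+3)) 1) ∘ Equiv.swap (1 : Fin (n+3)) 2) = g t := by
  rw [AlternatingMap.map_swap _ _ fin_one_ne_two,
    AlternatingMap.map_swap _ _ fin_zero_ne_one, neg_neg]

lemma rot3_val0 {n : ℕ} (t : Fin (n+3) → V) :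
    ((t ∘ Equiv.swap (0 : Fin (n+3)) 1) ∘ Equiv.swap (1 : Fin (n+3)) 2) 0 = t 1 := by
  simp only [Function.comp_apply]
  rw [Equiv.swap_apply_of_ne_of_ne fin_zero_ne_one fin_zero_ne_two, Equiv.swap_apply_left]

lemma rot3_val1 {n : ℕ} (t : Fin (n+3) → V) :
    ((t ∘ Equiv.swap (0 : Fin (n+3)) 1) ∘ Equiv.swap (1 : Fin (n+3)) 2) 1 = t 2 := by
  simp only [Function.comp_apply]
  rw [Equiv.swap_apply_left,
    Equiv.swap_apply_of_ne_of_ne fin_zero_ne_two.symm (Ne.symm fin_one_ne_two)]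

/-- Lift an independent family in the quotient and extend it. -/
lemma exists_lift_extension [FiniteDimensional ℝ V] (M : Submodule ℝ V) {r k : ℕ}
    (hrk : r ≤ k) (hk : k ≤ finrank ℝ (V ⧸ M)) (v : Fin r → V)
    (hv : LinearIndependent ℝ (fun i => M.mkQ (v i))) :
    ∃ c : Fin k → V, (∀ i : Fin r, c (Fin.castLE hrk i) = v i) ∧
      LinearIndependent ℝ (fun i => M.mkQ (c i)) := by
  classical
  obtain ⟨j, rfl⟩ : ∃ j, k = r + j := ⟨k - r, by omega⟩
  obtain ⟨u, hu1, hu2⟩ := extend_li j r _ hv (by omega)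
  choose w hw using fun i => M.mkQ_surjective (u i)
  refine ⟨fun i => if h : (i : ℕ) < r then v ⟨(i : ℕ), h⟩ else w i, fun i => ?_, ?_⟩
  · have hlt : ((Fin.castLE hrk i : Fin (r+j)) : ℕ) < r := i.2
    exact (dif_pos hlt).trans (congrArg v (Fin.ext rfl))
  · have heq : (fun i : Fin (r+j) => M.mkQ (if h : (i : ℕ) < r then v ⟨(i : ℕ), h⟩ else w i)) = u := by
      funext i
      by_cases h : (i : ℕ) < r
      · rw [dif_pos h]
        exact ((hu1 ⟨(i : ℕ), h⟩).symm).trans (congrArg u (Fin.ext rfl))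
      · rw [dif_neg h]; exact hw i
    rw [heq]; exact hu2
lemma polylag_mem_vanish {k : ℕ} {ω : V [⋀^Fin (k+1)]→ₗ[ℝ] ℝ} {L : Submodule ℝ V}
    (hL : IsPolyLag ω L) {u : V} (hu : u ∈ L) : ω.curryLeft u ∈ vanish L k :=
  (hL (ω.curryLeft u)).mp ⟨u, hu, fun _ => rfl⟩

lemma polylag_surj {k : ℕ} {ω : V [⋀^Fin (k+1)]→ₗ[ℝ] ℝ} {L : Submodule ℝ V}
    (hL : IsPolyLag ω L) {α : V [⋀^Fin k]→ₗ[ℝ] ℝ} (hα : α ∈ vanish L k) :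
    ∃ v ∈ L, ω.curryLeft v = α := by
  obtain ⟨v, hv, hval⟩ := (hL α).mpr hα
  exact ⟨v, hv, AlternatingMap.ext hval⟩

lemma isotropic_mem_vanish {k : ℕ} {ω : V [⋀^Fin (k+1)]→ₗ[ℝ] ℝ} {L' : Submodule ℝ V}
    (hiso : ∀ x : Fin (k+1) → V, x 0 ∈ L' → x 1 ∈ L' → ω x = 0)
    {u : V} (hu : u ∈ L') : ω.curryLeft u ∈ vanish L' k := by
  intro x i hx
  show ω (Fin.cons u x) = 0
  have hk : 0 < k := i.pos
  obtain ⟨k', rfl⟩ : ∃ k', k = k' + 1 := ⟨k - 1, by omega⟩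
  have h01 : (0 : Fin (k'+2)) ≠ 1 := fin_zero_ne_one
  by_cases h1 : (i.succ : Fin (k'+2)) = 1
  · apply hiso _ (by rw [Fin.cons_zero]; exact hu)
    rw [← h1, Fin.cons_succ]; exact hx
  · have hs := AlternatingMap.map_swap ω (Fin.cons u x) (Ne.symm h1)
    have hz : ω ((Fin.cons u x) ∘ Equiv.swap 1 i.succ) = 0 := by
      apply hiso
      · show (Fin.cons u x : Fin (k'+2) → V) (Equiv.swap 1 i.succ 0) ∈ L'
        rw [Equiv.swap_apply_of_ne_of_ne h01 (Fin.succ_ne_zero i).symm, Fin.cons_zero]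
        exact hu
      · show (Fin.cons u x : Fin (k'+2) → V) (Equiv.swap 1 i.succ 1) ∈ L'
        rw [Equiv.swap_apply_left, Fin.cons_succ]
        exact hx
    rw [hz] at hs
    linarith

lemma ker_le_polylag {j : ℕ} [FiniteDimensional ℝ V] {ω : V [⋀^Fin (j+2)]→ₗ[ℝ] ℝ}
    {L : Submodule ℝ V} (hL : IsPolyLag (k := j+1) ω L)
    (hkN : j + 1 ≤ finrank ℝ (V ⧸ L)) : LinearMap.ker ω.curryLeft ≤ L := by
  intro v hv
  by_contra hvL
  have h0 : L.mkQ v ≠ 0 := by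
    simpa [Submodule.Quotient.mk_eq_zero] using hvL
  have hli : LinearIndependent ℝ (fun i : Fin 1 => L.mkQ (![v] i)) := by
    apply linearIndependent_unique_iff.mpr
    simpa using h0
  obtain ⟨c, hc1, hc2⟩ := exists_lift_extension L (by omega : 1 ≤ j+1) hkN ![v] hli
  obtain ⟨α, hαv, hα1⟩ := exists_vanish_eval_one (by omega) L c hc2
  obtain ⟨uL, huL, hval⟩ := polylag_surj hL hαv
  have hc0 : c 0 = v := by
    have h := hc1 0
    rw [show (![v] : Fin 1 → V) 0 = v from rfl] at h
    rw [← h]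
    exact congrArg c (Fin.ext rfl)
  have key : ω (Fin.cons uL c) = α c := DFunLike.congr_fun hval c
  have hswap : (Fin.cons uL c : Fin (j+2) → V) ∘ Equiv.swap 0 1 =
      Fin.cons v (Fin.cons uL (Fin.tail c)) := by
    funext i
    refine Fin.cases ?_ (fun i' => ?_) i
    · show (Fin.cons uL c : Fin (j+2) → V) (Equiv.swap 0 1 0) = v
      rw [Equiv.swap_apply_left, cons_val_one', hc0]
    · refine Fin.cases ?_ (fun i'' => ?_) i'
      · show (Fin.cons uL c : Fin (j+2) → V) (Equiv.swap 0 1 1) = _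
        rw [Equiv.swap_apply_right, Fin.cons_zero, Fin.cons_succ, Fin.cons_zero]
      · show (Fin.cons uL c : Fin (j+2) → V) (Equiv.swap 0 1 i''.succ.succ) = _
        rw [Equiv.swap_apply_of_ne_of_ne (Fin.succ_ne_zero _)
          (by rw [← Fin.succ_zero_eq_one]; exact fun h => Fin.succ_ne_zero _ (Fin.succ_injective _ h))]
        rw [Fin.cons_succ, Fin.cons_succ, Fin.cons_succ]
        rfl
  have h2 : ω (Fin.cons v (Fin.cons uL (Fin.tail c))) = 0 := by
    have hz : ω.curryLeft v = 0 := hv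
    show ω.curryLeft v (Fin.cons uL (Fin.tail c)) = 0
    rw [hz]
    rfl
  have hsw := AlternatingMap.map_swap ω (Fin.cons uL c) (fin_zero_ne_one (n := j))
  rw [hswap, h2] at hsw
  rw [key, hα1] at hsw
  norm_num at hsw

lemma stepB {j : ℕ} [FiniteDimensional ℝ V] {ω : V [⋀^Fin (j+3)]→ₗ[ℝ] ℝ}
    {L L' : Submodule ℝ V} (hL : IsPolyLag (k := j+2) ω L)
    (hiso : ∀ x : Fin (j+3) → V, x 0 ∈ L' → x 1 ∈ L' → ω x = 0)
    (hkN : j + 2 ≤ finrank ℝ (V ⧸ L))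
    {v w : V} (hv : v ∈ L') (hw : w ∈ L')
    (hli : LinearIndependent ℝ (fun i : Fin 2 => L.mkQ (![v, w] i))) : False := by
  obtain ⟨c, hc1, hc2⟩ := exists_lift_extension L (by omega : 2 ≤ j+2) hkN ![v, w] hli
  obtain ⟨α, hαv, hα1⟩ := exists_vanish_eval_one (by omega) L c hc2
  obtain ⟨uL, huL, hval⟩ := polylag_surj hL hαv
  have hc0 : c 0 = v := by
    have h := hc1 0
    rw [show (![v, w] : Fin 2 → V) 0 = v from rfl] at h
    rw [← h]
    exact congrArg c (Fin.ext rfl)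
  have hcone : c 1 = w := by
    have h := hc1 1
    rw [show (![v, w] : Fin 2 → V) 1 = w from rfl] at h
    rw [← h]
    exact congrArg c (Fin.ext rfl)
  set t : Fin (j+3) → V := Fin.cons uL c with ht
  have hrot := rot3_eq ω t
  have hm0 : ((t ∘ Equiv.swap (0 : Fin (j+3)) 1) ∘ Equiv.swap 1 2) 0 ∈ L' := by
    rw [rot3_val0]
    rw [ht, cons_val_one', hc0]
    exact hv
  have hm1 : ((t ∘ Equiv.swap (0 : Fin (j+3)) 1) ∘ Equiv.swap 1 2) 1 ∈ L' := by
    rw [rot3_val1]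
    rw [ht, cons_val_two', hcone]
    exact hw
  have hz : ω ((t ∘ Equiv.swap (0 : Fin (j+3)) 1) ∘ Equiv.swap 1 2) = 0 := hiso _ hm0 hm1
  rw [hz] at hrot
  have hkey : ω t = α c := DFunLike.congr_fun hval c
  rw [hkey, hα1] at hrot
  norm_num at hrot

lemma finrank_ker_comp_subtype [FiniteDimensional ℝ V] {W : Type*} [AddCommGroup W]
    [Module ℝ W] (f : V →ₗ[ℝ] W) (P : Submodule ℝ V) :
    finrank ℝ ↥(LinearMap.ker (f ∘ₗ P.subtype)) = finrank ℝ ↥(P ⊓ LinearMap.ker f) := by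
  rw [← Submodule.finrank_map_subtype_eq P (LinearMap.ker (f ∘ₗ P.subtype))]
  rw [LinearMap.ker_comp, Submodule.map_comap_subtype]

lemma pos_finrank_of_ne_zero [FiniteDimensional ℝ V] {k : ℕ}
    {ω : V [⋀^Fin (k+1)]→ₗ[ℝ] ℝ} (hω : ω ≠ 0) : 0 < finrank ℝ V := by
  by_contra h0
  push_neg at h0
  have hsub : Subsingleton V := (finrank_zero_iff (R := ℝ)).mp (by omega)
  apply hω
  ext x
  have hx0 : x 0 = 0 := Subsingleton.elim _ _
  rw [AlternatingMap.map_coord_zero ω 0 hx0]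
  rfl

lemma part1 [FiniteDimensional ℝ V] {k N : ℕ}
    (ω : V [⋀^Fin (k+1)]→ₗ[ℝ] ℝ) (hω : ω ≠ 0)
    (L : Submodule ℝ V) (hL : IsPolyLag ω L) (hN : finrank ℝ (V ⧸ L) = N)
    (L' : Submodule ℝ V)
    (hiso : ∀ x : Fin (k+1) → V, x 0 ∈ L' → x 1 ∈ L' → ω x = 0)
    (hker : LinearMap.ker ω.curryLeft ≤ L')
    (hbig : finrank ℝ ↥(LinearMap.ker ω.curryLeft) + (N - 1).choose k + 1
        < finrank ℝ ↥L') :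
    L' ≤ L := by
  classical
  have hn : 0 < finrank ℝ V := pos_finrank_of_ne_zero hω
  set n := finrank ℝ V with hn'
  set kr := finrank ℝ ↥(LinearMap.ker ω.curryLeft) with hkr
  rcases k with _ | k'
  · -- k = 0 : vacuous by dimension count
    exfalso
    let e0 : Fin 0 → V := fun i => i.elim0
    let φ : V →ₗ[ℝ] ℝ := (evalAt e0) ∘ₗ ω.curryLeft
    have hkereq : LinearMap.ker ω.curryLeft = LinearMap.ker φ := by
      ext v
      simp only [LinearMap.mem_ker, LinearMap.comp_apply, evalAt_apply, φ]
      constructor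
      · intro h; rw [h]; rfl
      · intro h
        ext x
        rw [Subsingleton.elim x e0]
        exact h
    have hrn := LinearMap.finrank_range_add_finrank_ker φ
    have hr1 : finrank ℝ ↥(LinearMap.range φ) ≤ 1 := by
      have := Submodule.finrank_le (LinearMap.range φ)
      simpa using this
    have hkr' : kr = finrank ℝ ↥(LinearMap.ker φ) := by rw [hkr, hkereq]
    have hle : finrank ℝ ↥L' ≤ n := Submodule.finrank_le L'
    rw [Nat.choose_zero_right] at hbig
    omega
  · -- k = k' + 1 ≥ 1
    by_contra hnle
    obtain ⟨v0, hv0L', hv0L⟩ : ∃ x ∈ L', x ∉ L := by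
      rw [SetLike.not_le_iff_exists] at hnle
      exact hnle
    set a := finrank ℝ ↥(L ⊓ L') with ha
    set b := finrank ℝ ↥L' with hb
    have hrank1 : finrank ℝ ↥(L ⊔ L') + a = finrank ℝ ↥L + b :=
      Submodule.finrank_sup_add_finrank_inf_eq L L'
    have hrank2 : finrank ℝ (V ⧸ (L ⊔ L')) + finrank ℝ ↥(L ⊔ L') = n :=
      Submodule.finrank_quotient_add_finrank _
    have hrank3 : N + finrank ℝ ↥L = n := by
      rw [← hN]; exact Submodule.finrank_quotient_add_finrank L
    -- the chain bound
    have hchain : a ≤ kr + finrank ℝ ↥(vanish (L ⊔ L') (k'+1)) := by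
      set ρ := (ω.curryLeft) ∘ₗ (L ⊓ L').subtype with hρ
      have hrn := LinearMap.finrank_range_add_finrank_ker ρ
      have hk1 : finrank ℝ ↥(LinearMap.ker ρ) ≤ kr := by
        rw [hρ, finrank_ker_comp_subtype]
        exact Submodule.finrank_mono inf_le_right
      have hk2 : finrank ℝ ↥(LinearMap.range ρ) ≤ finrank ℝ ↥(vanish (L ⊔ L') (k'+1)) := by
        apply Submodule.finrank_mono
        rintro α ⟨⟨u, hu⟩, rfl⟩
        exact vanish_sup_mem (polylag_mem_vanish hL hu.1) (isotropic_mem_vanish hiso hu.2)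
      omega
    have hvan := finrank_vanish_le hn (L ⊔ L') (k'+1)
    have haleb : a ≤ b := Submodule.finrank_mono inf_le_right
    have hd : a < b := by
      rcases eq_or_lt_of_le haleb with heq | hlt
      · exfalso
        apply hnle
        have : L ⊓ L' = L' := Submodule.eq_of_le_of_finrank_le inf_le_right (by omega)
        rw [← this]
        exact inf_le_left
      · exact hlt
    set q := finrank ℝ (V ⧸ (L ⊔ L')) with hq
    have hqd : q + (b - a) = N := by omega
    rcases Nat.eq_zero_or_pos k' with hk'0 | hk'pos
    · -- k = 1
      subst hk'0
      rw [Nat.choose_one_right] at hbig hvan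
      omega
    · by_cases hd1 : b - a = 1
      · -- d = 1
        have hq1 : q = N - 1 := by omega
        rw [hq1] at hvan
        omega
      · -- d ≥ 2
        by_cases hkN : k' + 1 ≤ N
        · -- stepB
          obtain ⟨j, rfl⟩ : ∃ j, k' = j + 1 := ⟨k' - 1, by omega⟩
          -- find two independent vectors of L' mod L
          set g := L.mkQ ∘ₗ L'.subtype with hg
          have hrng := LinearMap.finrank_range_add_finrank_ker g
          have hkerg : finrank ℝ ↥(LinearMap.ker g) = a := by
            rw [hg, finrank_ker_comp_subtype, Submodule.ker_mkQ,
              show L' ⊓ L = L ⊓ L' from inf_comm L' L]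
          have hrg : 2 ≤ finrank ℝ ↥(LinearMap.range g) := by omega
          set R := LinearMap.range g with hR
          let bR : Basis (Fin (finrank ℝ ↥R)) ℝ ↥R := finBasis ℝ ↥R
          let ii : Fin 2 → Fin (finrank ℝ ↥R) := fun i => ⟨(i : ℕ), by omega⟩
          have hiiinj : Function.Injective ii := by
            intro x y hxy
            have h2 := congrArg Fin.val hxy
            exact Fin.ext h2
          have hpair : LinearIndependent ℝ (fun i : Fin 2 => ((bR (ii i) : V ⧸ L))) := by
            have h1 : LinearIndependent ℝ (fun i => ((bR i : V ⧸ L))) :=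
              bR.linearIndependent.map' R.subtype (Submodule.ker_subtype R)
            exact h1.comp ii hiiinj
          obtain ⟨w0, hw0⟩ := (bR (ii 0)).2
          obtain ⟨w1, hw1⟩ := (bR (ii 1)).2
          have hw0' : L.mkQ (w0 : V) = (bR (ii 0) : V ⧸ L) := hw0
          have hw1' : L.mkQ (w1 : V) = (bR (ii 1) : V ⧸ L) := hw1
          have hli : LinearIndependent ℝ
              (fun i : Fin 2 => L.mkQ ((![(w0 : V), (w1 : V)] : Fin 2 → V) i)) := by
            have : (fun i : Fin 2 => L.mkQ ((![(w0 : V), (w1 : V)] : Fin 2 → V) i)) =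
                (fun i : Fin 2 => ((bR (ii i) : V ⧸ L))) := by
              funext i
              fin_cases i
              · exact hw0'
              · exact hw1'
            rw [this]
            exact hpair
          exact stepB hL hiso (by omega) w0.2 w1.2 hli
        · -- k > N
          push_neg at hkN
          have hvL : vanish L (k'+1) = ⊥ := by
            have h1 := finrank_vanish_le hn L (k'+1)
            rw [hN, Nat.choose_eq_zero_of_lt (by omega)] at h1
            exact Submodule.finrank_eq_zero.mp (by omega)
          have hLker : L ≤ LinearMap.ker ω.curryLeft := by
            intro u hu
            have hm := polylag_mem_vanish hL hu
            rw [hvL] at hm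
            exact LinearMap.mem_ker.mpr (by simpa using hm)
          have hLL' : L ≤ L' := le_trans hLker hker
          set σf := (ω.curryLeft) ∘ₗ L'.subtype with hσf
          have hrnσ := LinearMap.finrank_range_add_finrank_ker σf
          have hkerσ : finrank ℝ ↥(LinearMap.ker σf) = kr := by
            rw [hσf, finrank_ker_comp_subtype, inf_eq_right.mpr hker]
          have hrangeσ : finrank ℝ ↥(LinearMap.range σf) ≤
              finrank ℝ ↥(vanish L' (k'+1)) := by
            apply Submodule.finrank_mono
            rintro α ⟨⟨u, hu⟩, rfl⟩
            exact isotropic_mem_vanish hiso hu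
          have hvanL' := finrank_vanish_le hn L' (k'+1)
          have hqL' : finrank ℝ (V ⧸ L') + b = n := Submodule.finrank_quotient_add_finrank L'
          have hLleL' : finrank ℝ ↥L ≤ b := Submodule.finrank_mono hLL'
          have hqsmall : finrank ℝ (V ⧸ L') < k' + 1 := by omega
          rw [Nat.choose_eq_zero_of_lt hqsmall] at hvanL'
          omega

lemma polylag_isotropic {k : ℕ} {ω : V [⋀^Fin (k+2)]→ₗ[ℝ] ℝ} {L' : Submodule ℝ V}
    (hL' : IsPolyLag (k := k+1) ω L') :
    ∀ x : Fin (k+2) → V, x 0 ∈ L' → x 1 ∈ L' → ω x = 0 := by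
  intro x h0 h1
  have hm := polylag_mem_vanish hL' h0
  have h2 : (Fin.tail x) 0 ∈ L' := by
    show x (Fin.succ 0) ∈ L'
    rw [Fin.succ_zero_eq_one]
    exact h1
  have h3 := hm (Fin.tail x) 0 h2
  rw [show ω.curryLeft (x 0) (Fin.tail x) = ω (Fin.cons (x 0) (Fin.tail x)) from rfl,
    Fin.cons_self_tail] at h3
  exact h3

lemma polylag_big {k N : ℕ} [FiniteDimensional ℝ V] {ω : V [⋀^Fin (k+3)]→ₗ[ℝ] ℝ}
    {L' : Submodule ℝ V} (hL' : IsPolyLag (k := k+2) ω L')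
    (hN' : finrank ℝ (V ⧸ L') = N) (hkN : k + 2 < N) :
    finrank ℝ ↥(LinearMap.ker ω.curryLeft) + (N-1).choose (k+2) + 1
      < finrank ℝ ↥L' := by
  have hker : LinearMap.ker ω.curryLeft ≤ L' :=
    ker_le_polylag (j := k+1) hL' (by rw [hN']; omega)
  set σf := ω.curryLeft ∘ₗ L'.subtype with hσf
  have hrn := LinearMap.finrank_range_add_finrank_ker σf
  have hkerσ : finrank ℝ ↥(LinearMap.ker σf) =
      finrank ℝ ↥(LinearMap.ker ω.curryLeft) := by
    rw [hσf, finrank_ker_comp_subtype, inf_eq_right.mpr hker]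
  have hrangeσ : finrank ℝ ↥(vanish L' (k+2)) ≤ finrank ℝ ↥(LinearMap.range σf) := by
    apply Submodule.finrank_mono
    intro α hα
    obtain ⟨v, hv, hval⟩ := polylag_surj hL' hα
    exact ⟨⟨v, hv⟩, hval⟩
  have hvan := choose_le_finrank_vanish L' (k+2)
  rw [hN'] at hvan
  obtain ⟨N'', rfl⟩ : ∃ N'', N = N'' + 2 := ⟨N - 2, by omega⟩
  have hp1 : (N''+2).choose (k+2) = (N''+1).choose (k+1) + (N''+1).choose (k+2) :=
    Nat.choose_succ_succ _ _
  have hp2 : (N''+1).choose (k+1) = N''.choose k + N''.choose (k+1) :=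
    Nat.choose_succ_succ _ _
  have hc1 : 0 < N''.choose k := Nat.choose_pos (by omega)
  have hc2 : 0 < N''.choose (k+1) := Nat.choose_pos (by omega)
  have hsimp : (N'' + 2 - 1) = N'' + 1 := by omega
  rw [hsimp]
  omega

end Aux

/-- For a scalar polylagrangian `(k+1)`-form of rank `N` with polylagrangian subspace `L`:
every isotropic subspace `L'` containing `ker ω` with
`dim L' > dim ker ω + C(N−1,k) + 1` is contained in `L`; in particular, if `N > k > 1`,
the polylagrangian subspace (of rank `N`) is unique. -/
theorem stmt6 {V : Type*} [AddCommGroup V] [Module ℝ V] [FiniteDimensional ℝ V]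
    {k N : ℕ}
    (ω : V [⋀^Fin (k+1)]→ₗ[ℝ] ℝ) (hω : ω ≠ 0)
    (L : Submodule ℝ V) (hL : IsPolyLag ω L) (hN : Module.finrank ℝ (V ⧸ L) = N) :
    (∀ L' : Submodule ℝ V,
        (∀ x : Fin (k+1) → V, x 0 ∈ L' → x 1 ∈ L' → ω x = 0) →
        LinearMap.ker ω.curryLeft ≤ L' →
        Module.finrank ℝ ↥(LinearMap.ker ω.curryLeft) + (N - 1).choose k + 1
            < Module.finrank ℝ ↥L' →
        L' ≤ L)
      ∧ (k < N → 1 < k →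
          ∀ L' : Submodule ℝ V, IsPolyLag ω L' →
            Module.finrank ℝ (V ⧸ L') = N → L' = L) := by
  constructor
  · intro L' hiso hker hbig
    exact part1 ω hω L hL hN L' hiso hker hbig
  · intro hkN hk1 L' hL' hN'
    obtain ⟨k'', rfl⟩ : ∃ k'', k = k'' + 2 := ⟨k - 2, by omega⟩
    have hisoL := polylag_isotropic (k := k'' + 1) hL
    have hisoL' := polylag_isotropic (k := k'' + 1) hL'
    have hbigL' := polylag_big (k := k'') hL' hN' (by omega)
    have hbigL := polylag_big (k := k'') hL hN (by omega)
    have h1 : L' ≤ L :=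
      part1 ω hω L hL hN L' hisoL'
        (ker_le_polylag (j := k'' + 1) hL' (by rw [hN']; omega)) hbigL'
    have h2 : L ≤ L' :=
      part1 ω hω L' hL' hN' L hisoL
        (ker_le_polylag (j := k'' + 1) hL (by rw [hN]; omega)) hbigL
    exact le_antisymm h1 h2
end
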